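/- Let f(x) = x² − x − 3 and let f^{−i}(B) denote the preimage of B ⊆ ℝ under the i-th iterate of f. Then in ℝ the closure of the set {3} ∪ ⋃_{i=0}^{∞} f^{−i}({0, −2}) equals the closure of the set ⋃_{i=0}^{∞} f^{−i}({0}). -/
import Mathlib

/-- The polynomial `f(x) = x² - x - 3`, as a map `ℝ → ℝ`. -/
def hanoiPoly : ℝ → ℝ := fun x => x ^ 2 - x - 3

namespace HanoiAux

noncomputable def S : Set ℝ := ⋃ i : ℕ, hanoiPoly^[i] ⁻¹' {0}

lemma iter_gt_three {t : ℝ} (ht : 3 < t) : ∀ i, 3 < hanoiPoly^[i] t := by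
  intro i
  induction i with
  | zero => simpa using ht
  | succ n ih =>
    rw [Function.iterate_succ_apply']
    have := ih
    simp only [hanoiPoly]
    nlinarith

lemma mem_S_ge {t : ℝ} (ht : t ∈ S) : -2 ≤ t := by
  by_contra h
  push_neg at h
  obtain ⟨i, hi⟩ := Set.mem_iUnion.mp ht
  simp only [Set.mem_preimage, Set.mem_singleton_iff] at hi
  cases i with
  | zero => simp at hi; linarith
  | succ n =>
    rw [Function.iterate_succ_apply] at hi
    have h3 : 3 < hanoiPoly t := by simp only [hanoiPoly]; nlinarith
    have := iter_gt_three h3 n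
    rw [hi] at this
    norm_num at this

lemma backward {x : ℝ} (hx : hanoiPoly x ∈ closure S) : x ∈ closure S := by
  set ε : ℝ := if 1/2 ≤ x then 1 else -1 with hε
  set g : ℝ → ℝ := fun t => (1 + ε * Real.sqrt (13 + 4 * t)) / 2 with hg
  have hgc : Continuous g := by
    apply Continuous.div_const
    exact continuous_const.add (continuous_const.mul
      (Real.continuous_sqrt.comp (by continuity)))
  -- g maps S into S
  have hgS : g '' S ⊆ S := by
    rintro _ ⟨t, htS, rfl⟩
    have ht2 : -2 ≤ t := mem_S_ge htS
    have hnn : (0:ℝ) ≤ 13 + 4 * t := by linarith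
    have hsq : Real.sqrt (13 + 4 * t) ^ 2 = 13 + 4 * t := Real.sq_sqrt hnn
    have hf : hanoiPoly (g t) = t := by
      simp only [hanoiPoly, hg]
      have hε2 : ε ^ 2 = 1 := by rcases le_or_gt (1/2) x with h | h <;> simp [hε, h]
      nlinarith [hsq, hε2]
    obtain ⟨i, hi⟩ := Set.mem_iUnion.mp htS
    simp only [Set.mem_preimage, Set.mem_singleton_iff] at hi
    apply Set.mem_iUnion.mpr ⟨i + 1, _⟩
    simp only [Set.mem_preimage, Set.mem_singleton_iff, Function.iterate_succ_apply, hf, hi]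
  -- g (f x) = x
  have hgfx : g (hanoiPoly x) = x := by
    have h1 : (13 : ℝ) + 4 * hanoiPoly x = (2 * x - 1) ^ 2 := by
      simp only [hanoiPoly]; ring
    rcases le_or_gt (1/2) x with h | h
    · have : Real.sqrt (13 + 4 * hanoiPoly x) = 2 * x - 1 := by
        rw [h1, Real.sqrt_sq (by linarith)]
      simp only [hg, hε, if_pos h, this]; ring
    · have : Real.sqrt (13 + 4 * hanoiPoly x) = 1 - 2 * x := by
        rw [h1, show (2*x-1)^2 = (1-2*x)^2 by ring, Real.sqrt_sq (by linarith)]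
      simp only [hg, hε, if_neg (not_le.mpr h), this]; ring
  have hmem : x ∈ closure (g '' S) := by
    rw [← hgfx]
    exact image_closure_subset_closure_image hgc ⟨_, hx, rfl⟩
  exact closure_mono hgS hmem

noncomputable def a : ℕ → ℝ
  | 0 => 0
  | n + 1 => (1 + Real.sqrt (13 + 4 * a n)) / 2

lemma a_bounds : ∀ n, 0 ≤ a n ∧ a n ≤ 3 := by
  intro n
  induction n with
  | zero => simp [a]
  | succ n ih =>
    obtain ⟨h0, h3⟩ := ih
    have hnn : (0:ℝ) ≤ 13 + 4 * a n := by linarith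
    have hs := Real.sqrt_nonneg (13 + 4 * a n)
    have hsq : Real.sqrt (13 + 4 * a n) ^ 2 = 13 + 4 * a n := Real.sq_sqrt hnn
    constructor
    · simp only [a]; linarith
    · simp only [a]; nlinarith

lemma a_mem_S : ∀ n, a n ∈ S := by
  have key : ∀ n, hanoiPoly^[n] (a n) = 0 := by
    intro n
    induction n with
    | zero => simp [a]
    | succ n ih =>
      rw [Function.iterate_succ_apply]
      have h0 := (a_bounds n).1
      have hnn : (0:ℝ) ≤ 13 + 4 * a n := by linarith
      have hsq : Real.sqrt (13 + 4 * a n) ^ 2 = 13 + 4 * a n := Real.sq_sqrt hnn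
      have : hanoiPoly (a (n+1)) = a n := by
        simp only [a, hanoiPoly]; nlinarith
      rw [this, ih]
  intro n
  exact Set.mem_iUnion.mpr ⟨n, by simp [key n]⟩

lemma a_dist : ∀ n, 3 - a n ≤ 3 * (1/4) ^ n := by
  intro n
  induction n with
  | zero => simp [a]
  | succ n ih =>
    have h0 := (a_bounds n).1
    have h3 := (a_bounds n).2
    have hnn : (0:ℝ) ≤ 13 + 4 * a n := by linarith
    have hs := Real.sqrt_nonneg (13 + 4 * a n)
    have hsq : Real.sqrt (13 + 4 * a n) ^ 2 = 13 + 4 * a n := Real.sq_sqrt hnn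
    have hs3 : 3 ≤ Real.sqrt (13 + 4 * a n) := by nlinarith
    have step : 3 - a (n+1) ≤ (3 - a n) / 4 := by
      simp only [a]; nlinarith
    have : (3 - a n) / 4 ≤ 3 * (1/4)^(n+1) := by
      rw [pow_succ]
      linarith
    linarith

lemma three_mem_closure : (3 : ℝ) ∈ closure S := by
  have htend : Filter.Tendsto a Filter.atTop (nhds 3) := by
    have h1 : Filter.Tendsto (fun n : ℕ => 3 - 3 * (1/4:ℝ) ^ n) Filter.atTop (nhds 3) := by
      have := tendsto_pow_atTop_nhds_zero_of_lt_one (by norm_num : (0:ℝ) ≤ 1/4) (by norm_num)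
      have := ((this.const_mul 3).const_sub 3)
      simpa using this
    have h2 : Filter.Tendsto (fun _ : ℕ => (3:ℝ)) Filter.atTop (nhds 3) := tendsto_const_nhds
    apply tendsto_of_tendsto_of_tendsto_of_le_of_le h1 h2
    · intro n; have := a_dist n; simp only []; linarith
    · intro n; exact (a_bounds n).2
  exact mem_closure_of_tendsto htend (Filter.Eventually.of_forall a_mem_S)

lemma backward_iter : ∀ i (x : ℝ), hanoiPoly^[i] x ∈ closure S → x ∈ closure S := by
  intro i
  induction i with
  | zero => intro x hx; simpa using hx
  | succ n ih =>
    intro x hx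
    rw [Function.iterate_succ_apply] at hx
    exact backward (ih _ hx)

end HanoiAux

/-- With `f(x) = x² - x - 3`, the closure in `ℝ` of
`{3} ∪ ⋃_{i≥0} f⁻ⁱ({0, -2})` equals the closure of `⋃_{i≥0} f⁻ⁱ({0})`. -/
theorem hanoi3_spectrum_closure :
    closure ({(3 : ℝ)} ∪ ⋃ i : ℕ, hanoiPoly^[i] ⁻¹' {0, -2}) =
      closure (⋃ i : ℕ, hanoiPoly^[i] ⁻¹' {0}) := by
  apply subset_antisymm
  · apply closure_minimal _ isClosed_closure
    rintro x (hx | hx)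
    · rw [Set.mem_singleton_iff] at hx
      rw [hx]
      exact HanoiAux.three_mem_closure
    · obtain ⟨i, hi⟩ := Set.mem_iUnion.mp hx
      simp only [Set.mem_preimage, Set.mem_insert_iff, Set.mem_singleton_iff] at hi
      rcases hi with h0 | h2
      · exact subset_closure (Set.mem_iUnion.mpr ⟨i, by simp [h0]⟩)
      · apply HanoiAux.backward_iter i
        rw [h2]
        apply HanoiAux.backward
        have : hanoiPoly (-2) = 3 := by norm_num [hanoiPoly]
        rw [this]
        exact HanoiAux.three_mem_closure
  · apply closure_mono
    intro x hx
    right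
    obtain ⟨i, hi⟩ := Set.mem_iUnion.mp hx
    refine Set.mem_iUnion.mpr ⟨i, ?_⟩
    simp only [Set.mem_preimage, Set.mem_singleton_iff] at hi
    simp [hi]
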